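/- Fix real constants m₀ > 0, ω > 0, ħ > 0, a > -1, γ > 1/2 and set λ₀ = √(m₀ω/ħ). Define for x ≠ 0: (X̃f)(x) = √m₀·λ₀^a·|x|^a·x·f(x), (P̃f)(x) = -iħ·(λ₀^a√m₀)⁻¹·( |x|^{-a}·f'(x) - (a/2)·|x|^{-a-2}·x·f(x) - (γ-1/2)·|x|^{-a}·x⁻¹·f(-x) ), and the ladder operators (ã^±f)(x) = (1/√2)·(√(ω/ħ)·(X̃f)(x) ∓ (i/√(ħω))·(P̃f)(x)). Then for every f : ℝ → ℂ twice differentiable on ℝ \ {0} and every x ≠ 0: ã⁻(ã⁺f)(x) - ã⁺(ã⁻f)(x) = (1+a)·f(x) + (2γ-1)·f(-x). -/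

import Mathlib

/-- The deformed position operator `(X̃f)(x) = √m₀·λ₀^a·|x|^a·x·f(x)`. -/
noncomputable def Xop (m₀ lam a : ℝ) (f : ℝ → ℂ) (x : ℝ) : ℂ :=
  ((Real.sqrt m₀ * lam ^ a * |x| ^ a * x : ℝ) : ℂ) * f x

/-- The deformed parabose momentum operator
`(P̃f)(x) = -iħ·(λ₀^a√m₀)⁻¹·(|x|^(-a)·f'(x) - (a/2)·|x|^(-a-2)·x·f(x)
  - (γ-1/2)·|x|^(-a)·x⁻¹·f(-x))`. -/
noncomputable def Ppb (hbar m₀ lam a γ : ℝ) (f : ℝ → ℂ) (x : ℝ) : ℂ :=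
  (-Complex.I) * (hbar : ℂ) * (((lam ^ a * Real.sqrt m₀ : ℝ) : ℂ))⁻¹ *
    (((|x| ^ (-a) : ℝ) : ℂ) * deriv f x
      - ((a / 2 : ℝ) : ℂ) * ((|x| ^ (-a - 2) : ℝ) : ℂ) * (x : ℂ) * f x
      - ((γ - 1 / 2 : ℝ) : ℂ) * ((|x| ^ (-a) : ℝ) : ℂ) * (x : ℂ)⁻¹ * f (-x))

/-- The parabose creation operator `(ã⁺f)(x) = (1/√2)·(√(ω/ħ)·(X̃f)(x) - (i/√(ħω))·(P̃f)(x))`. -/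
noncomputable def aPlusPB (hbar m₀ ω lam a γ : ℝ) (f : ℝ → ℂ) (x : ℝ) : ℂ :=
  ((1 / Real.sqrt 2 : ℝ) : ℂ) *
    (((Real.sqrt (ω / hbar) : ℝ) : ℂ) * Xop m₀ lam a f x
      - Complex.I / ((Real.sqrt (hbar * ω) : ℝ) : ℂ) * Ppb hbar m₀ lam a γ f x)

/-- The parabose annihilation operator
`(ã⁻f)(x) = (1/√2)·(√(ω/ħ)·(X̃f)(x) + (i/√(ħω))·(P̃f)(x))`. -/
noncomputable def aMinusPB (hbar m₀ ω lam a γ : ℝ) (f : ℝ → ℂ) (x : ℝ) : ℂ :=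
  ((1 / Real.sqrt 2 : ℝ) : ℂ) *
    (((Real.sqrt (ω / hbar) : ℝ) : ℂ) * Xop m₀ lam a f x
      + Complex.I / ((Real.sqrt (hbar * ω) : ℝ) : ℂ) * Ppb hbar m₀ lam a γ f x)

theorem keyL (s : ℝ) {y : ℝ} (hy : y ≠ 0) : (y * y) ^ (s/2) = |y| ^ s := by
  rw [← abs_mul_abs_self, Real.mul_rpow (abs_nonneg y) (abs_nonneg y),
    ← Real.rpow_add (abs_pos.mpr hy)]
  norm_num

theorem L1 (r : ℝ) {x : ℝ} (hx : x ≠ 0) :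
    HasDerivAt (fun y : ℝ => |y| ^ r) (r * |x| ^ (r-2) * x) x := by
  have h1 : HasDerivAt (fun y : ℝ => y * y) (2 * x) x := by
    simpa [two_mul] using (hasDerivAt_id x).fun_mul (hasDerivAt_id x)
  have h2 : HasDerivAt (fun t : ℝ => t ^ (r/2)) ((r/2) * (x * x) ^ (r/2 - 1)) (x * x) :=
    Real.hasDerivAt_rpow_const (Or.inl (mul_ne_zero hx hx))
  have h3 : HasDerivAt ((fun t : ℝ => t ^ (r/2)) ∘ (fun y : ℝ => y * y))
      ((r/2) * (x * x) ^ (r/2 - 1) * (2 * x)) x :=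
    HasDerivAt.comp (h := fun y : ℝ => y * y) x h2 h1
  have hval : (x * x) ^ (r/2 - 1) = |x| ^ (r - 2) := by
    have := keyL (r - 2) hx
    rw [← this]; ring_nf
  have h4 : HasDerivAt (fun y : ℝ => |y| ^ r)
      ((r/2) * (x * x) ^ (r/2 - 1) * (2 * x)) x := by
    apply h3.congr_of_eventuallyEq
    filter_upwards [eventually_ne_nhds hx] with y hy
    exact (keyL r hy).symm
  convert h4 using 1
  rw [hval]; ring

theorem L2 (r : ℝ) {x : ℝ} (hx : x ≠ 0) :
    HasDerivAt (fun y : ℝ => |y| ^ r * y) ((r + 1) * |x| ^ r) x := by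
  have h := (L1 r hx).fun_mul (hasDerivAt_id' x)
  refine h.congr_deriv ?_
  have : |x| ^ (r - 2) * (x * x) = |x| ^ r := by
    rw [← keyL (r - 2) hx, ← keyL r hx, ← Real.rpow_add_one (mul_ne_zero hx hx)]
    congr 1; ring
  linear_combination r * this

theorem L1c (r : ℝ) {x : ℝ} (hx : x ≠ 0) :
    HasDerivAt (fun y : ℝ => ((|y| ^ r : ℝ) : ℂ)) ((r * |x| ^ (r-2) * x : ℝ) : ℂ) x :=
  (L1 r hx).ofReal_comp

theorem L2c (r : ℝ) {x : ℝ} (hx : x ≠ 0) :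
    HasDerivAt (fun y : ℝ => ((|y| ^ r * y : ℝ) : ℂ)) (((r + 1) * |x| ^ r : ℝ) : ℂ) x :=
  (L2 r hx).ofReal_comp

noncomputable def Gop (A B C D : ℂ) (a : ℝ) (f : ℝ → ℂ) (y : ℝ) : ℂ :=
  A * ((|y| ^ a * y : ℝ) : ℂ) * f y
  + B * ((|y| ^ (-a) : ℝ) : ℂ) * deriv f y
  + C * ((|y| ^ (-a - 2) * y : ℝ) : ℂ) * f y
  + D * ((|y| ^ (-a) : ℝ) : ℂ) * ((y : ℝ) : ℂ)⁻¹ * f (-y)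

theorem Gop_hasDerivAt (A B C D : ℂ) (a : ℝ) (f : ℝ → ℂ)
    (hf : ∀ y : ℝ, y ≠ 0 → DifferentiableAt ℝ f y)
    (hf' : ∀ y : ℝ, y ≠ 0 → DifferentiableAt ℝ (deriv f) y)
    {x : ℝ} (hx : x ≠ 0) :
    HasDerivAt (Gop A B C D a f)
      ((A * (((a + 1) * |x| ^ a : ℝ) : ℂ) * f x
          + A * ((|x| ^ a * x : ℝ) : ℂ) * deriv f x)
        + (B * ((-a * |x| ^ (-a - 2) * x : ℝ) : ℂ) * deriv f x
          + B * ((|x| ^ (-a) : ℝ) : ℂ) * deriv (deriv f) x)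
        + (C * (((-a - 2 + 1) * |x| ^ (-a - 2) : ℝ) : ℂ) * f x
          + C * ((|x| ^ (-a - 2) * x : ℝ) : ℂ) * deriv f x)
        + ((D * ((-a * |x| ^ (-a - 2) * x : ℝ) : ℂ) * ((x : ℝ) : ℂ)⁻¹
            + D * ((|x| ^ (-a) : ℝ) : ℂ) * (-(((x : ℝ) : ℂ) ^ 2)⁻¹)) * f (-x)
          + D * ((|x| ^ (-a) : ℝ) : ℂ) * ((x : ℝ) : ℂ)⁻¹ * (-deriv f (-x)))) x := by
  have hnx : (-x : ℝ) ≠ 0 := neg_ne_zero.mpr hx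
  have hfx : HasDerivAt f (deriv f x) x := (hf x hx).hasDerivAt
  have hf'x : HasDerivAt (deriv f) (deriv (deriv f) x) x := (hf' x hx).hasDerivAt
  have t1 := ((L2c a hx).const_mul A).mul hfx
  have t2 := ((L1c (-a) hx).const_mul B).mul hf'x
  have t3 := ((L2c (-a - 2) hx).const_mul C).mul hfx
  have hid : HasDerivAt (fun y : ℝ => ((y : ℝ) : ℂ)) 1 x := by
    simpa using (hasDerivAt_id x).ofReal_comp
  have hxc : ((x : ℝ) : ℂ) ≠ 0 := Complex.ofReal_ne_zero.mpr hx
  have hinv : HasDerivAt (fun y : ℝ => ((y : ℝ) : ℂ)⁻¹) (-(((x : ℝ) : ℂ) ^ 2)⁻¹) x :=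
    (hasDerivAt_inv hxc).comp_ofReal
  have hneg0 : HasDerivAt (f ∘ fun y : ℝ => -y) ((-1 : ℝ) • deriv f (-x)) x :=
    HasDerivAt.scomp (g₁ := f) (h := fun y : ℝ => -y) x (hf (-x) hnx).hasDerivAt
      (hasDerivAt_neg x)
  have hneg : HasDerivAt (fun y : ℝ => f (-y)) (-deriv f (-x)) x := by
    simpa [Function.comp_def] using hneg0
  have t4 := ((((L1c (-a) hx).const_mul D).mul hinv)).mul hneg
  exact ((t1.add t2).add t3).add t4

set_option maxHeartbeats 4000000 in
theorem master (a γ : ℝ) (A β : ℂ) (hAβ : A * β = -(1/2)) (f : ℝ → ℂ)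
    (hf : ∀ y : ℝ, y ≠ 0 → DifferentiableAt ℝ f y)
    (hf' : ∀ y : ℝ, y ≠ 0 → DifferentiableAt ℝ (deriv f) y)
    {x : ℝ} (hx : x ≠ 0) :
    Gop A (-β) (β * ((a : ℂ)/2)) (β * ((γ : ℂ) - 1/2)) a
        (Gop A β (-(β * ((a : ℂ)/2))) (-(β * ((γ : ℂ) - 1/2))) a f) x
      - Gop A β (-(β * ((a : ℂ)/2))) (-(β * ((γ : ℂ) - 1/2))) a
        (Gop A (-β) (β * ((a : ℂ)/2)) (β * ((γ : ℂ) - 1/2)) a f) x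
    = ((1 + a : ℝ) : ℂ) * f x + ((2 * γ - 1 : ℝ) : ℂ) * f (-x) := by
  have hdp := (Gop_hasDerivAt A β (-(β * ((a : ℂ)/2))) (-(β * ((γ : ℂ) - 1/2))) a f hf hf' hx).deriv
  have hdm := (Gop_hasDerivAt A (-β) (β * ((a : ℂ)/2)) (β * ((γ : ℂ) - 1/2)) a f hf hf' hx).deriv
  have hvx : (0:ℝ) < |x| := abs_pos.mpr hx
  have cv1 : ((|x| ^ (-a) : ℝ) : ℂ) = (((|x| ^ a : ℝ) : ℂ))⁻¹ := by
    rw [Real.rpow_neg (abs_nonneg x)]; push_cast; ring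
  have cv2 : ((|x| ^ (-a - 2) : ℝ) : ℂ)
      = (((|x| ^ a : ℝ) : ℂ))⁻¹ * (((x : ℝ) : ℂ))⁻¹ * (((x : ℝ) : ℂ))⁻¹ := by
    have h2 : |x| ^ (-a - 2) = (|x| ^ a)⁻¹ * (x * x)⁻¹ := by
      rw [show (-a - 2 : ℝ) = -a + -2 by ring, Real.rpow_add hvx,
        Real.rpow_neg (abs_nonneg x), show ((-2:ℝ) = -(2:ℝ)) from rfl,
        Real.rpow_neg (abs_nonneg x), show ((2:ℝ) = ((2:ℕ):ℝ)) by norm_num,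
        Real.rpow_natCast]
      rw [show |x| ^ (2:ℕ) = x * x by rw [sq_abs]; ring]
    rw [h2]; push_cast; ring
  have hvc : (((|x| ^ a : ℝ) : ℂ)) ≠ 0 :=
    Complex.ofReal_ne_zero.mpr (ne_of_gt (Real.rpow_pos_of_pos hvx a))
  have hxc : ((x : ℝ) : ℂ) ≠ 0 := Complex.ofReal_ne_zero.mpr hx
  have key : Gop A (-β) (β * ((a : ℂ)/2)) (β * ((γ : ℂ) - 1/2)) a
        (Gop A β (-(β * ((a : ℂ)/2))) (-(β * ((γ : ℂ) - 1/2))) a f) x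
      - Gop A β (-(β * ((a : ℂ)/2))) (-(β * ((γ : ℂ) - 1/2))) a
        (Gop A (-β) (β * ((a : ℂ)/2)) (β * ((γ : ℂ) - 1/2)) a f) x
      = (-2) * (A * β) * (((1 + a : ℝ) : ℂ) * f x + ((2 * γ - 1 : ℝ) : ℂ) * f (-x)) := by
    simp only [Gop]
    rw [hdp, hdm]
    simp only [Gop, abs_neg, neg_neg, Complex.ofReal_neg, mul_neg, neg_mul, inv_neg]
    push_cast
    rw [cv1, cv2]
    revert hvc hxc
    generalize ((|x| ^ a : ℝ) : ℂ) = P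
    generalize ((x : ℝ) : ℂ) = X
    intro hvc hxc
    ring_nf
    field_simp
    ring
  rw [key, hAβ]
  ring

noncomputable def Acoef (hbar m₀ ω lam a : ℝ) : ℂ :=
  ((1 / Real.sqrt 2 : ℝ) : ℂ) * ((Real.sqrt (ω / hbar) : ℝ) : ℂ)
    * ((Real.sqrt m₀ : ℝ) : ℂ) * ((lam ^ a : ℝ) : ℂ)

noncomputable def Bcoef (hbar m₀ ω lam a : ℝ) : ℂ :=
  -(((1 / Real.sqrt 2 : ℝ) : ℂ) * (Complex.I / ((Real.sqrt (hbar * ω) : ℝ) : ℂ))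
    * (-Complex.I * ((hbar : ℝ) : ℂ) * (((lam ^ a : ℝ) : ℂ) * ((Real.sqrt m₀ : ℝ) : ℂ))⁻¹))

theorem aPlus_shape (hbar m₀ ω lam a γ : ℝ) (f : ℝ → ℂ) :
    aPlusPB hbar m₀ ω lam a γ f
      = Gop (Acoef hbar m₀ ω lam a) (Bcoef hbar m₀ ω lam a)
          (-(Bcoef hbar m₀ ω lam a * ((a : ℂ) / 2)))
          (-(Bcoef hbar m₀ ω lam a * ((γ : ℂ) - 1 / 2))) a f := by
  funext y
  simp only [aPlusPB, Ppb, Xop, Gop, Acoef, Bcoef]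
  push_cast
  ring

theorem aMinus_shape (hbar m₀ ω lam a γ : ℝ) (f : ℝ → ℂ) :
    aMinusPB hbar m₀ ω lam a γ f
      = Gop (Acoef hbar m₀ ω lam a) (-Bcoef hbar m₀ ω lam a)
          (Bcoef hbar m₀ ω lam a * ((a : ℂ) / 2))
          (Bcoef hbar m₀ ω lam a * ((γ : ℂ) - 1 / 2)) a f := by
  funext y
  simp only [aMinusPB, Ppb, Xop, Gop, Acoef, Bcoef]
  push_cast
  ring

/-- the deformed osp(1|2) relation
`ã⁻(ã⁺f)(x) - ã⁺(ã⁻f)(x) = (1+a)·f(x) + (2γ-1)·f(-x)` for every `f` twice differentiable on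
`ℝ \ {0}` and every `x ≠ 0`. -/
theorem stmt12 (m₀ ω hbar a γ : ℝ) (hm₀ : 0 < m₀) (hω : 0 < ω) (hhb : 0 < hbar)
    (ha : -1 < a) (hγ : 1 / 2 < γ)
    (lam : ℝ) (hlam : lam = Real.sqrt (m₀ * ω / hbar))
    (f : ℝ → ℂ)
    (hf : ∀ y : ℝ, y ≠ 0 → DifferentiableAt ℝ f y)
    (hf' : ∀ y : ℝ, y ≠ 0 → DifferentiableAt ℝ (deriv f) y)
    (x : ℝ) (hx : x ≠ 0) :
    aMinusPB hbar m₀ ω lam a γ (aPlusPB hbar m₀ ω lam a γ f) x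
      - aPlusPB hbar m₀ ω lam a γ (aMinusPB hbar m₀ ω lam a γ f) x
      = ((1 + a : ℝ) : ℂ) * f x + ((2 * γ - 1 : ℝ) : ℂ) * f (-x) := by
  have hlam0 : 0 < lam := by
    rw [hlam]; exact Real.sqrt_pos.mpr (by positivity)
  have hL : ((lam ^ a : ℝ) : ℂ) ≠ 0 :=
    Complex.ofReal_ne_zero.mpr (ne_of_gt (Real.rpow_pos_of_pos hlam0 a))
  have hM : ((Real.sqrt m₀ : ℝ) : ℂ) ≠ 0 :=
    Complex.ofReal_ne_zero.mpr (ne_of_gt (Real.sqrt_pos.mpr hm₀))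
  have hsh : ((Real.sqrt (hbar * ω) : ℝ) : ℂ) ≠ 0 :=
    Complex.ofReal_ne_zero.mpr (ne_of_gt (Real.sqrt_pos.mpr (by positivity)))
  have hLM : ((lam ^ a : ℝ) : ℂ) * ((Real.sqrt m₀ : ℝ) : ℂ) ≠ 0 := mul_ne_zero hL hM
  have h1 : Real.sqrt (ω / hbar) * hbar = Real.sqrt (hbar * ω) := by
    have h2 : Real.sqrt (ω / hbar) * Real.sqrt (hbar ^ 2) = Real.sqrt (ω / hbar * hbar ^ 2) :=
      (Real.sqrt_mul (by positivity) _).symm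
    rw [Real.sqrt_sq hhb.le] at h2
    rw [h2]
    congr 1
    field_simp
  have e1 : ((1 / Real.sqrt 2 : ℝ) : ℂ) * ((1 / Real.sqrt 2 : ℝ) : ℂ) = 1 / 2 := by
    rw [← Complex.ofReal_mul, div_mul_div_comm, Real.mul_self_sqrt (by norm_num : (0:ℝ) ≤ 2)]
    norm_num
  have e2 : ((Real.sqrt (ω / hbar) : ℝ) : ℂ) * ((hbar : ℝ) : ℂ)
      = ((Real.sqrt (hbar * ω) : ℝ) : ℂ) := by
    rw [← Complex.ofReal_mul, h1]
  have eI : Complex.I * -Complex.I = 1 := by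
    simp [Complex.I_mul_I]
  have hAβ : Acoef hbar m₀ ω lam a * Bcoef hbar m₀ ω lam a = -(1/2) := by
    have step : Acoef hbar m₀ ω lam a * Bcoef hbar m₀ ω lam a
        = -((((1 / Real.sqrt 2 : ℝ) : ℂ) * ((1 / Real.sqrt 2 : ℝ) : ℂ))
            * ((((Real.sqrt (ω / hbar) : ℝ) : ℂ) * ((hbar : ℝ) : ℂ))
                * (((Real.sqrt (hbar * ω) : ℝ) : ℂ))⁻¹)
            * ((((lam ^ a : ℝ) : ℂ) * ((Real.sqrt m₀ : ℝ) : ℂ))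
                * ((((lam ^ a : ℝ) : ℂ) * ((Real.sqrt m₀ : ℝ) : ℂ)))⁻¹)
            * (Complex.I * -Complex.I)) := by
      simp only [Acoef, Bcoef]
      ring
    rw [step, e2, e1, mul_inv_cancel₀ hsh, mul_inv_cancel₀ hLM, eI]
    norm_num
  rw [aPlus_shape, aMinus_shape, aPlus_shape, aMinus_shape]
  exact master a γ (Acoef hbar m₀ ω lam a) (Bcoef hbar m₀ ω lam a) hAβ f hf hf' hx
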